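/- arXiv:2306.13014 — 2 statements merged into one kernel-verified Lean document; each statement's English description precedes it below -/
import Mathlib

section
/- Let Δ : [0,1]² → ℝ be the kernel that is constant on each of the 9 squares [(i-1)/3, i/3) × [(j-1)/3, j/3), taking the values given by the symmetric matrix [[2,-1,-1],[-1,1,0],[-1,0,1]]. Then Δ is balanced (∫₀¹ Δ(x,y) dy = 0 for all x) and the triangle density t(K₃,Δ) = 28/27. -/
open MeasureTheory

/-- The 3×3 matrix of block values. -/
def stepMatrix : Fin 3 → Fin 3 → ℝ :=
  ![![2, -1, -1], ![-1, 1, 0], ![-1, 0, 1]]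

/-- Which third of `[0,1]` a point lies in. -/
noncomputable def blockIdx (x : ℝ) : Fin 3 :=
  if x < 1/3 then 0 else if x < 2/3 then 1 else 2

/-- The step kernel given by `stepMatrix` on the nine `1/3 × 1/3` squares. -/
noncomputable def stepKernel (x y : ℝ) : ℝ := stepMatrix (blockIdx x) (blockIdx y)

/-- The triangle density `t(K₃,Δ) = ∫∫∫ Δ(x,y)Δ(y,z)Δ(x,z)`. -/
noncomputable def triangleDensity (Δ : ℝ → ℝ → ℝ) : ℝ :=
  ∫ x in Set.Icc (0:ℝ) 1, ∫ y in Set.Icc (0:ℝ) 1, ∫ z in Set.Icc (0:ℝ) 1,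
    Δ x y * Δ y z * Δ x z

lemma split3 : Set.Icc (0:ℝ) 1 =
    Set.Ico (0:ℝ) (1/3) ∪ (Set.Ico (1/3:ℝ) (2/3) ∪ Set.Icc (2/3:ℝ) 1) := by
  ext x
  simp only [Set.mem_Icc, Set.mem_Ico, Set.mem_union]
  constructor
  · rintro ⟨h0, h1⟩
    rcases lt_or_ge x (1/3) with h | h
    · exact Or.inl ⟨h0, h⟩
    · rcases lt_or_ge x (2/3) with h' | h'
      · exact Or.inr (Or.inl ⟨h, h'⟩)
      · exact Or.inr (Or.inr ⟨h', h1⟩)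
  · rintro (⟨a, b⟩ | ⟨a, b⟩ | ⟨a, b⟩) <;> constructor <;> linarith

lemma blk0 : ∀ y ∈ Set.Ico (0:ℝ) (1/3), blockIdx y = 0 := by
  intro y hy; rw [blockIdx, if_pos hy.2]

lemma blk1 : ∀ y ∈ Set.Ico (1/3:ℝ) (2/3), blockIdx y = 1 := by
  intro y hy; rw [blockIdx, if_neg (not_lt.2 hy.1), if_pos hy.2]

lemma blk2 : ∀ y ∈ Set.Icc (2/3:ℝ) 1, blockIdx y = 2 := by
  intro y hy
  have h1 : ¬ y < 1/3 := by have := hy.1; intro h; linarith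
  have h2 : ¬ y < 2/3 := not_lt.2 hy.1
  rw [blockIdx, if_neg h1, if_neg h2]

lemma sm00 : stepMatrix 0 0 = 2 := rfl
lemma sm01 : stepMatrix 0 1 = -1 := rfl
lemma sm02 : stepMatrix 0 2 = -1 := rfl
lemma sm10 : stepMatrix 1 0 = -1 := rfl
lemma sm11 : stepMatrix 1 1 = 1 := rfl
lemma sm12 : stepMatrix 1 2 = 0 := rfl
lemma sm20 : stepMatrix 2 0 = -1 := rfl
lemma sm21 : stepMatrix 2 1 = 0 := rfl
lemma sm22 : stepMatrix 2 2 = 1 := rfl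

lemma intOn (f : Fin 3 → ℝ) (s : Set ℝ) (hs : MeasurableSet s) (c : Fin 3)
    (h : ∀ y ∈ s, blockIdx y = c) (hfin : volume s ≠ ⊤) :
    IntegrableOn (fun y => f (blockIdx y)) s := by
  have he : Set.EqOn (fun _ => f c) (fun y => f (blockIdx y)) s := by
    intro y hy; simp only [h y hy]
  exact (integrableOn_const hfin).congr_fun he hs

lemma intConst (f : Fin 3 → ℝ) (s : Set ℝ) (hs : MeasurableSet s) (c : Fin 3)
    (h : ∀ y ∈ s, blockIdx y = c) :
    ∫ y in s, f (blockIdx y) = (volume s).toReal * f c := by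
  have he : Set.EqOn (fun y => f (blockIdx y)) (fun _ => f c) s := by
    intro y hy; simp only [h y hy]
  rw [setIntegral_congr_fun hs he, setIntegral_const, smul_eq_mul]
  rfl

lemma key (f : Fin 3 → ℝ) :
    (∫ y in Set.Icc (0:ℝ) 1, f (blockIdx y)) = (f 0 + f 1 + f 2) / 3 := by
  have d1 : Disjoint (Set.Ico (0:ℝ) (1/3))
      (Set.Ico (1/3:ℝ) (2/3) ∪ Set.Icc (2/3:ℝ) 1) := by
    rw [Set.disjoint_left]
    rintro x ⟨_, hx⟩ (⟨h, _⟩ | ⟨h, _⟩) <;> linarith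
  have d2 : Disjoint (Set.Ico (1/3:ℝ) (2/3)) (Set.Icc (2/3:ℝ) 1) := by
    rw [Set.disjoint_left]
    rintro x ⟨_, hx⟩ ⟨h, _⟩; linarith
  have m1 : MeasurableSet (Set.Ico (0:ℝ) (1/3)) := measurableSet_Ico
  have m2 : MeasurableSet (Set.Ico (1/3:ℝ) (2/3)) := measurableSet_Ico
  have m3 : MeasurableSet (Set.Icc (2/3:ℝ) 1) := measurableSet_Icc
  have i1 := intOn f _ m1 0 blk0 (by simp)
  have i2 := intOn f _ m2 1 blk1 (by simp)
  have i3 := intOn f _ m3 2 blk2 (by simp)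
  rw [split3, setIntegral_union d1 (m2.union m3) i1 (i2.union i3),
    setIntegral_union d2 m3 i2 i3,
    intConst f _ m1 0 blk0, intConst f _ m2 1 blk1, intConst f _ m3 2 blk2]
  rw [Real.volume_Ico, Real.volume_Ico, Real.volume_Icc]
  norm_num
  ring

/-- the step kernel is balanced and its triangle density is `28/27`. -/
theorem stmt4 :
    (∀ x ∈ Set.Icc (0:ℝ) 1, (∫ y in Set.Icc (0:ℝ) 1, stepKernel x y) = 0) ∧
    triangleDensity stepKernel = 28/27 := by
  constructor
  · intro x _
    have := key (stepMatrix (blockIdx x))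
    simp only [stepKernel]
    rw [this]
    generalize blockIdx x = i
    fin_cases i <;> norm_num [stepMatrix, Matrix.cons_val_two, Matrix.tail_cons, Matrix.head_cons]
  · set A : Fin 3 → Fin 3 → ℝ := fun i j =>
      (stepMatrix i j * stepMatrix j 0 * stepMatrix i 0 +
       stepMatrix i j * stepMatrix j 1 * stepMatrix i 1 +
       stepMatrix i j * stepMatrix j 2 * stepMatrix i 2) / 3 with hA
    set B : Fin 3 → ℝ := fun i => (A i 0 + A i 1 + A i 2) / 3 with hB
    have h1 : ∀ x y : ℝ,
        (∫ z in Set.Icc (0:ℝ) 1, stepKernel x y * stepKernel y z * stepKernel x z)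
        = A (blockIdx x) (blockIdx y) := by
      intro x y
      simp only [stepKernel]
      exact key (fun k => stepMatrix (blockIdx x) (blockIdx y) *
        stepMatrix (blockIdx y) k * stepMatrix (blockIdx x) k)
    have h2 : ∀ x : ℝ,
        (∫ y in Set.Icc (0:ℝ) 1, ∫ z in Set.Icc (0:ℝ) 1,
          stepKernel x y * stepKernel y z * stepKernel x z) = B (blockIdx x) := by
      intro x
      simp only [h1]
      exact key (fun j => A (blockIdx x) j)
    unfold triangleDensity
    simp only [h2]
    rw [key B]
    simp only [hB, hA, sm00, sm01, sm02, sm10, sm11, sm12, sm20, sm21, sm22]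
    norm_num
end

section
/- Let p be an odd prime, and let G be a graph on ℓ vertices with minimum degree at least 2 that is not a clique. For any signing σ ∈ {±1}^{E(G)}, the symmetric ℓ×ℓ matrix M_G^σ = Σ_{e∈E(G)} σ_e E_e over 𝔽_p has rank at least 2, where E_e is the matrix with entries 1 in positions (e₁,e₁),(e₁,e₂),(e₂,e₁),(e₂,e₂) and 0 elsewhere. -/
open scoped Classical

/-- The matrix `M_G^σ = Σ_{e ∈ E(G)} σ_e E_e` over `𝔽_p`, where `E_e` has ones in the
four positions indexed by the endpoints of `e` and zeros elsewhere. -/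
noncomputable def signedEdgeMatrix (p : ℕ) {ℓ : ℕ} (G : SimpleGraph (Fin ℓ))
    (σ : Sym2 (Fin ℓ) → ZMod p) : Matrix (Fin ℓ) (Fin ℓ) (ZMod p) :=
  Matrix.of fun i j =>
    ∑ e ∈ G.edgeFinset, σ e * (if i ∈ e ∧ j ∈ e then 1 else 0)

lemma signedEdgeMatrix_adj (p : ℕ) {ℓ : ℕ} (G : SimpleGraph (Fin ℓ))
    (σ : Sym2 (Fin ℓ) → ZMod p) {i j : Fin ℓ} (h : G.Adj i j) :
    signedEdgeMatrix p G σ i j = σ s(i, j) := by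
  have hne : i ≠ j := h.ne
  simp only [signedEdgeMatrix, Matrix.of_apply]
  rw [Finset.sum_eq_single s(i, j)]
  · simp
  · intro e he hne'
    have : ¬ (i ∈ e ∧ j ∈ e) := by
      intro hmem
      exact hne' ((Sym2.mem_and_mem_iff hne).mp hmem)
    simp [this]
  · intro habs
    exact absurd (SimpleGraph.mem_edgeFinset.mpr h) habs

lemma signedEdgeMatrix_nadj (p : ℕ) {ℓ : ℕ} (G : SimpleGraph (Fin ℓ))
    (σ : Sym2 (Fin ℓ) → ZMod p) {i j : Fin ℓ} (hne : i ≠ j) (h : ¬ G.Adj i j) :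
    signedEdgeMatrix p G σ i j = 0 := by
  simp only [signedEdgeMatrix, Matrix.of_apply]
  apply Finset.sum_eq_zero
  intro e he
  have : ¬ (i ∈ e ∧ j ∈ e) := by
    intro hmem
    have : e = s(i, j) := (Sym2.mem_and_mem_iff hne).mp hmem
    subst this
    exact h (SimpleGraph.mem_edgeFinset.mp he)
  simp [this]

/-- for an odd prime `p` and a non-clique graph `G` of minimum degree
at least 2, every `±1` signing `σ` of the edges gives `rank(M_G^σ) ≥ 2` over `𝔽_p`. -/
theorem stmt15 (p : ℕ) [Fact p.Prime] (hodd : Odd p)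
    (ℓ : ℕ) (G : SimpleGraph (Fin ℓ))
    (hdeg : ∀ v : Fin ℓ, 2 ≤ G.degree v) (hnclique : G ≠ ⊤)
    (σ : Sym2 (Fin ℓ) → ZMod p)
    (hσ : ∀ e ∈ G.edgeFinset, σ e = 1 ∨ σ e = -1) :
    2 ≤ (signedEdgeMatrix p G σ).rank := by
  set M := signedEdgeMatrix p G σ with hM
  -- σ is nonzero on edges
  have hσne : ∀ {a b : Fin ℓ}, G.Adj a b → σ s(a, b) ≠ 0 := by
    intro a b hab
    rcases hσ s(a, b) (SimpleGraph.mem_edgeFinset.mpr hab) with h1 | h1 <;> rw [h1]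
    · exact one_ne_zero
    · exact neg_ne_zero.mpr one_ne_zero
  -- find a non-adjacent pair
  obtain ⟨u, w, huw, hnadj⟩ : ∃ u w : Fin ℓ, u ≠ w ∧ ¬ G.Adj u w := by
    by_contra hc
    push_neg at hc
    apply hnclique
    ext a b
    simp only [SimpleGraph.top_adj]
    exact ⟨fun h => h.ne, fun h => hc a b h⟩
  -- neighbors
  obtain ⟨v, huv⟩ : ∃ v, G.Adj u v := by
    rw [← SimpleGraph.degree_pos_iff_exists_adj]
    exact lt_of_lt_of_le (by norm_num) (hdeg u)
  obtain ⟨t, hwt⟩ : ∃ t, G.Adj w t := by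
    rw [← SimpleGraph.degree_pos_iff_exists_adj]
    exact lt_of_lt_of_le (by norm_num) (hdeg w)
  have htu : t ≠ u := by
    rintro rfl
    exact hnadj hwt.symm
  -- the rows u and t of M are linearly independent
  have hMuw : M u w = 0 := signedEdgeMatrix_nadj p G σ huw hnadj
  have hMtw : M t w = σ s(t, w) := signedEdgeMatrix_adj p G σ hwt.symm
  have hMuv : M u v = σ s(u, v) := signedEdgeMatrix_adj p G σ huv
  have hli : LinearIndependent (ZMod p) ![M u, M t] := by
    rw [LinearIndependent.pair_iff]
    intro s r hsr
    have hw : s * M u w + r * M t w = 0 := by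
      have := congrFun hsr w
      simpa using this
    rw [hMuw, hMtw, mul_zero, zero_add] at hw
    have hr : r = 0 := by
      rcases mul_eq_zero.mp hw with h | h
      · exact h
      · exact absurd h (hσne hwt.symm)
    subst hr
    have hv : s * M u v = 0 := by
      have := congrFun hsr v
      simpa using this
    have hs : s = 0 := by
      rw [hMuv] at hv
      rcases mul_eq_zero.mp hv with h | h
      · exact h
      · exact absurd h (hσne huv)
    exact ⟨hs, rfl⟩
  -- rank = dim of row span, which contains two independent vectors
  rw [Matrix.rank_eq_finrank_span_row]
  have hsub : Submodule.span (ZMod p) (Set.range ![M u, M t]) ≤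
      Submodule.span (ZMod p) (Set.range M) := by
    apply Submodule.span_mono
    rintro x ⟨i, rfl⟩
    fin_cases i
    · exact ⟨u, rfl⟩
    · exact ⟨t, rfl⟩
  have h2 : Module.finrank (ZMod p)
      (Submodule.span (ZMod p) (Set.range ![M u, M t])) = 2 := by
    rw [finrank_span_eq_card hli]
    simp
  rw [← h2]
  exact Submodule.finrank_mono hsub
end
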